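/- Let E be a real Banach space, a < b real numbers and τ = b - a. If f : ℝ → E is twice continuously differentiable on [a,b] and θ ∈ [0,1], then ‖(f(b) - f(a))/τ - (θ f'(b) + (1-θ) f'(a))‖ ≤ max(θ, 1-θ) ∫_a^b ‖f''(s)‖ ds. -/

import Mathlib

open Set intervalIntegral

/-- L¹-type bound for the θ-scheme consistency error:
`‖(f(b) - f(a))/τ - (θ f'(b) + (1-θ) f'(a))‖ ≤ max(θ, 1-θ) ∫_a^b ‖f''(s)‖ ds`. -/
theorem theta_consistency_L1_bound
    {E : Type*} [NormedAddCommGroup E] [NormedSpace ℝ E] [CompleteSpace E]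
    (a b τ θ : ℝ) (hab : a < b) (hτ : τ = b - a) (hθ : θ ∈ Icc (0 : ℝ) 1)
    (f f' f'' : ℝ → E)
    (hf : ∀ t ∈ Icc a b, HasDerivWithinAt f (f' t) (Icc a b) t)
    (hf' : ∀ t ∈ Icc a b, HasDerivWithinAt f' (f'' t) (Icc a b) t)
    (hf'' : ContinuousOn f'' (Icc a b)) :
    ‖(1 / τ) • (f b - f a) - (θ • f' b + (1 - θ) • f' a)‖
      ≤ max θ (1 - θ) * ∫ s in a..b, ‖f'' s‖ := by
  obtain ⟨hθ0, hθ1⟩ := hθ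
  have hab' : a ≤ b := hab.le
  have hτ0 : 0 < τ := by rw [hτ]; linarith
  set M : ℝ := max θ (1 - θ) with hM
  set I : ℝ := ∫ s in a..b, ‖f'' s‖ with hI
  set c : E := θ • f' b + (1 - θ) • f' a with hc
  have hcf : ContinuousOn f (Icc a b) := fun t ht => (hf t ht).continuousWithinAt
  have hcf' : ContinuousOn f' (Icc a b) := fun t ht => (hf' t ht).continuousWithinAt
  have hIntf'' : ∀ s t, s ∈ Icc a b → t ∈ Icc a b → s ≤ t →
      IntervalIntegrable f'' MeasureTheory.volume s t := by
    intro s t hs ht hst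
    apply (hf''.mono _).intervalIntegrable
    rw [uIcc_of_le hst]
    exact Icc_subset_Icc hs.1 ht.2
  -- FTC for f' on subintervals
  have hFTC' : ∀ s t, s ∈ Icc a b → t ∈ Icc a b → s ≤ t →
      (∫ u in s..t, f'' u) = f' t - f' s := by
    intro s t hs ht hst
    apply integral_eq_sub_of_hasDeriv_right_of_le hst
      (hcf'.mono (Icc_subset_Icc hs.1 ht.2))
      (fun x hx => ?_) (hIntf'' s t hs ht hst)
    exact (hf' x ⟨hs.1.trans hx.1.le, hx.2.le.trans ht.2⟩).mono_of_mem_nhdsWithin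
      (Icc_mem_nhdsGT_of_mem ⟨hs.1.trans hx.1.le, hx.2.trans_le ht.2⟩)
  -- FTC for f
  have hFTCf : (∫ s in a..b, f' s) = f b - f a := by
    apply integral_eq_sub_of_hasDeriv_right_of_le hab' hcf (fun x hx => ?_)
      ((hcf'.mono (by rw [uIcc_of_le hab'])).intervalIntegrable)
    exact (hf x (Ioo_subset_Icc_self hx)).mono_of_mem_nhdsWithin
      (Icc_mem_nhdsGT_of_mem ⟨hx.1.le, hx.2⟩)
  have hMθ : θ ≤ M := le_max_left _ _
  have hMθ' : 1 - θ ≤ M := le_max_right _ _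
  -- pointwise bound
  have key : ∀ s ∈ Icc a b, ‖f' s - c‖ ≤ M * I := by
    intro s hs
    have hsa : s ∈ Icc a b := hs
    have hsplit : (∫ u in a..s, ‖f'' u‖) + (∫ u in s..b, ‖f'' u‖) = I := by
      rw [hI]
      exact integral_add_adjacent_intervals
        ((hIntf'' a s (left_mem_Icc.2 hab') hs hs.1).norm)
        ((hIntf'' s b hs (right_mem_Icc.2 hab') hs.2).norm)
    have hJa : ‖f' s - f' a‖ ≤ ∫ u in a..s, ‖f'' u‖ := by
      rw [← hFTC' a s (left_mem_Icc.2 hab') hs hs.1]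
      exact intervalIntegral.norm_integral_le_integral_norm hs.1
    have hJb : ‖f' s - f' b‖ ≤ ∫ u in s..b, ‖f'' u‖ := by
      rw [norm_sub_rev, ← hFTC' s b hs (right_mem_Icc.2 hab') hs.2]
      exact intervalIntegral.norm_integral_le_integral_norm hs.2
    have ha0 : (0:ℝ) ≤ ∫ u in a..s, ‖f'' u‖ :=
      intervalIntegral.integral_nonneg hs.1 (fun _ _ => norm_nonneg _)
    have hb0 : (0:ℝ) ≤ ∫ u in s..b, ‖f'' u‖ :=
      intervalIntegral.integral_nonneg hs.2 (fun _ _ => norm_nonneg _)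
    have hdecomp : f' s - c = θ • (f' s - f' b) + (1 - θ) • (f' s - f' a) := by
      rw [hc]; module
    calc ‖f' s - c‖ = ‖θ • (f' s - f' b) + (1 - θ) • (f' s - f' a)‖ := by rw [hdecomp]
      _ ≤ ‖θ • (f' s - f' b)‖ + ‖(1 - θ) • (f' s - f' a)‖ := norm_add_le _ _
      _ = θ * ‖f' s - f' b‖ + (1 - θ) * ‖f' s - f' a‖ := by
          rw [norm_smul, norm_smul, Real.norm_of_nonneg hθ0,
            Real.norm_of_nonneg (by linarith)]
      _ ≤ M * (∫ u in s..b, ‖f'' u‖) + M * (∫ u in a..s, ‖f'' u‖) := by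
          apply add_le_add
          · exact mul_le_mul hMθ hJb (norm_nonneg _) (le_trans hθ0 hMθ)
          · exact mul_le_mul hMθ' hJa (norm_nonneg _) (le_trans hθ0 hMθ)
      _ = M * I := by rw [← hsplit]; ring
  -- rewrite the error as an average
  have herr : (1 / τ) • (f b - f a) - c = (1 / τ) • ∫ s in a..b, (f' s - c) := by
    have hint : (∫ s in a..b, (f' s - c)) = (f b - f a) - (b - a) • c := by
      rw [intervalIntegral.integral_sub
          ((hcf'.mono (by rw [uIcc_of_le hab'])).intervalIntegrable)
          intervalIntegrable_const, hFTCf, intervalIntegral.integral_const]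
    have h1 : (1 / τ) * (b - a) = 1 := by
      rw [hτ]; field_simp [sub_ne_zero.2 hab.ne']
    rw [hint]
    conv_rhs => rw [smul_sub, smul_smul, h1, one_smul]
  rw [herr]
  have hbound : ‖∫ s in a..b, (f' s - c)‖ ≤ M * I * |b - a| := by
    apply intervalIntegral.norm_integral_le_of_norm_le_const
    intro x hx
    rw [uIoc_of_le hab'] at hx
    exact key x ⟨hx.1.le, hx.2⟩
  rw [norm_smul, Real.norm_of_nonneg (by positivity : (0:ℝ) ≤ 1/τ)]
  calc (1 / τ) * ‖∫ s in a..b, (f' s - c)‖ ≤ (1 / τ) * (M * I * |b - a|) := by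
        apply mul_le_mul_of_nonneg_left hbound (by positivity)
    _ = M * I := by
        have hba : b - a ≠ 0 := sub_ne_zero.2 hab.ne'
        rw [abs_of_nonneg (by linarith : (0:ℝ) ≤ b - a), hτ]
        field_simp
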